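/- If d and r are vectors in R^n with r^T d = 0, λ > 0, H is a symmetric matrix satisfying g + (H + λI)d = r and d^T (H + λI) d ≥ 0, then the quadratic model decrease satisfies q(0) - q(d) ≥ (1/2) λ ‖d‖², where q(d) = f + g^T d + (1/2) d^T H d. -/

import Mathlib

open scoped RealInnerProductSpace

theorem stmt0 (n : ℕ) (g d r : EuclideanSpace ℝ (Fin n))
    (H : EuclideanSpace ℝ (Fin n) →L[ℝ] EuclideanSpace ℝ (Fin n))
    (hH : IsSelfAdjoint H) (lam : ℝ) (hlam : 0 < lam) (f : ℝ)
    (q : EuclideanSpace ℝ (Fin n) → ℝ)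
    (hq : ∀ u, q u = f + ⟪g, u⟫ + (1/2) * ⟪u, H u⟫)
    (hrd : ⟪r, d⟫ = 0)
    (heq : g + (H d + lam • d) = r)
    (hcurv : 0 ≤ ⟪d, H d + lam • d⟫) :
    q 0 - q d ≥ (1/2) * lam * ‖d‖^2 := by
  have hg : g = r - H d - lam • d := by
    have := heq; abel_nf; linear_combination (norm := abel_nf) this
  have hgd : ⟪g, d⟫ = -⟪d, H d⟫ - lam * ‖d‖^2 := by
    rw [hg]
    rw [inner_sub_left, inner_sub_left, hrd, real_inner_smul_left,
      real_inner_self_eq_norm_sq, real_inner_comm]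
    ring
  have hcurv' : 0 ≤ ⟪d, H d⟫ + lam * ‖d‖^2 := by
    rw [inner_add_right, real_inner_smul_right, real_inner_self_eq_norm_sq] at hcurv
    linarith
  rw [hq, hq, inner_zero_right, map_zero, inner_zero_right, hgd]
  nlinarith [hcurv']
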